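/- Let Π be a Hermitian projector with non-negative entries and ψ a non-negative vector with Πψ = ψ. If x is in the support of ψ and ⟨x|Π|y⟩ > 0 for some basis index y, then y is also in the support of ψ and ψ(y)/ψ(x) = sqrt(⟨y|Π|y⟩/⟨x|Π|x⟩). -/

import Mathlib

open Finset

/-- Key Perron-type lemma: if `A` is a symmetric idempotent nonnegative real matrix
and `f` a nonnegative fixed vector, then on the "block" of `x` the vector `f` is
proportional to the row of `A` at `x`. -/
lemma key_block {N : ℕ} (A : Matrix (Fin N) (Fin N) ℝ)
    (hsym : ∀ u v, A u v = A v u)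
    (hproj : ∀ u v, A u v = ∑ k, A u k * A k v)
    (hnn : ∀ u v, 0 ≤ A u v)
    (f : Fin N → ℝ) (hf : ∀ u, 0 ≤ f u)
    (hfix : ∀ u, (∑ k, A u k * f k) = f u)
    (x : Fin N) (hx : 0 < A x x) :
    ∀ u, 0 < A x u → f u * A x x = f x * A x u := by
  classical
  set B : Finset (Fin N) := Finset.univ.filter (fun u => 0 < A x u) with hB
  have hmemB : ∀ u, u ∈ B ↔ 0 < A x u := by intro u; simp [hB]
  have hxB : x ∈ B := (hmemB x).2 hx
  obtain ⟨u₀, hu₀B, hmin⟩ := B.exists_min_image (fun u => f u / A x u) ⟨x, hxB⟩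
  set s : ℝ := f u₀ / A x u₀ with hs
  have hAxu₀ : 0 < A x u₀ := (hmemB u₀).1 hu₀B
  set z : Fin N → ℝ := fun u => f u - s * A x u with hz
  have hznn : ∀ u, 0 ≤ z u := by
    intro u
    by_cases h : 0 < A x u
    · have h1 : s ≤ f u / A x u := hmin u ((hmemB u).2 h)
      have h2 : s * A x u ≤ f u := (le_div_iff₀ h).1 h1
      simp only [hz]
      linarith
    · have h0 : A x u = 0 := le_antisymm (not_lt.1 h) (hnn x u)
      simp [hz, h0, hf u]
  have hrowfix : ∀ u, (∑ k, A u k * A x k) = A x u := by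
    intro u
    calc (∑ k, A u k * A x k) = ∑ k, A u k * A k x :=
          Finset.sum_congr rfl (fun k _ => by rw [hsym x k])
      _ = A u x := (hproj u x).symm
      _ = A x u := hsym u x
  have hzu₀ : z u₀ = 0 := by
    simp only [hz, hs]
    field_simp
    ring
  have hsum0 : (∑ k, A u₀ k * z k) = 0 := by
    have : (∑ k, A u₀ k * z k)
        = (∑ k, A u₀ k * f k) - s * (∑ k, A u₀ k * A x k) := by
      rw [Finset.mul_sum, ← Finset.sum_sub_distrib]
      apply Finset.sum_congr rfl
      intro k _
      simp only [hz]
      ring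
    rw [this, hfix u₀, hrowfix u₀]
    have := hzu₀
    simp only [hz] at this
    linarith
  have hterm0 : ∀ k, A u₀ k * z k = 0 := by
    have h := (Finset.sum_eq_zero_iff_of_nonneg
      (fun k _ => mul_nonneg (hnn u₀ k) (hznn k))).1 hsum0
    intro k; exact h k (Finset.mem_univ k)
  have hzB : ∀ u, 0 < A x u → z u = 0 := by
    intro u hu
    have hpos : 0 < A u₀ u := by
      have hle : A u₀ x * A x u ≤ ∑ k, A u₀ k * A k u := by
        apply Finset.single_le_sum (f := fun k => A u₀ k * A k u)
          (fun k _ => mul_nonneg (hnn u₀ k) (hnn k u)) (Finset.mem_univ x)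
      have h1 : 0 < A u₀ x * A x u := by
        have := hsym u₀ x
        nlinarith
      rw [hproj u₀ u]
      linarith
    have := hterm0 u
    rcases mul_eq_zero.1 this with h | h
    · exact absurd h hpos.ne'
    · exact h
  intro u hu
  have h1 : f u = s * A x u := by have := hzB u hu; simp only [hz] at this; linarith
  have h2 : f x = s * A x x := by have := hzB x hx; simp only [hz] at this; linarith
  rw [h1, h2]; ring

/-- If `P` is a Hermitian projector with non-negative entries, `ψ` a
non-negative vector with `Pψ = ψ`, `x` in the support of `ψ` and `⟨x|P|y⟩ > 0`, then
`y` is in the support of `ψ` and `ψ(y)/ψ(x) = sqrt(⟨y|P|y⟩/⟨x|P|x⟩)`. -/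
theorem stmt_6 {N : ℕ} (P : Matrix (Fin N) (Fin N) ℂ)
    (hherm : P.IsHermitian) (hproj : P * P = P)
    (hnonneg : ∀ x y, (P x y).im = 0 ∧ 0 ≤ (P x y).re)
    (ψ : Fin N → ℂ) (hψ : ∀ x, (ψ x).im = 0 ∧ 0 ≤ (ψ x).re)
    (hfix : P.mulVec ψ = ψ)
    (x y : Fin N) (hx : 0 < (ψ x).re) (hxy : 0 < (P x y).re) :
    0 < (ψ y).re ∧ (ψ y).re / (ψ x).re = Real.sqrt ((P y y).re / (P x x).re) := by
  classical
  set A : Matrix (Fin N) (Fin N) ℝ := fun u v => (P u v).re with hA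
  set f : Fin N → ℝ := fun u => (ψ u).re with hf
  have hsym : ∀ u v, A u v = A v u := by
    intro u v
    have h := congrFun (congrFun hherm v) u
    simp only [Matrix.conjTranspose_apply] at h
    have : (starRingEnd ℂ (P u v)) = P v u := h
    have h2 := congrArg Complex.re this
    show (P u v).re = (P v u).re
    simpa using h2
  have hnnA : ∀ u v, 0 ≤ A u v := fun u v => (hnonneg u v).2
  have hprojA : ∀ u v, A u v = ∑ k, A u k * A k v := by
    intro u v
    have h := congrFun (congrFun hproj u) v
    rw [Matrix.mul_apply] at h
    have := congrArg Complex.re h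
    rw [Complex.re_sum] at this
    show (P u v).re = ∑ k, (P u k).re * (P k v).re
    rw [← this]
    apply Finset.sum_congr rfl
    intro k _
    rw [Complex.mul_re, (hnonneg u k).1, (hnonneg k v).1]
    ring
  have hfnn : ∀ u, 0 ≤ f u := fun u => (hψ u).2
  have hfixA : ∀ u, (∑ k, A u k * f k) = f u := by
    intro u
    have h := congrFun hfix u
    rw [Matrix.mulVec, dotProduct] at h
    have := congrArg Complex.re h
    rw [Complex.re_sum] at this
    show (∑ k, (P u k).re * (ψ k).re) = (ψ u).re
    rw [← this]
    apply Finset.sum_congr rfl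
    intro k _
    rw [Complex.mul_re, (hnonneg u k).1, (hψ k).1]
    ring
  have hc : 0 < A x y := hxy
  have ha : 0 < A x x := by
    have hle : A x y * A y x ≤ ∑ k, A x k * A k x :=
      Finset.single_le_sum (f := fun k => A x k * A k x)
        (fun k _ => mul_nonneg (hnnA x k) (hnnA k x)) (Finset.mem_univ y)
    have hs := hsym x y
    rw [hprojA x x]
    nlinarith
  -- apply key lemma to the row of A at y
  have hrowy_fix : ∀ u, (∑ k, A u k * A y k) = A y u := by
    intro u
    calc (∑ k, A u k * A y k) = ∑ k, A u k * A k y :=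
          Finset.sum_congr rfl (fun k _ => by rw [hsym y k])
      _ = A u y := (hprojA u y).symm
      _ = A y u := hsym u y
  have hb_eq : A y y * A x x = A x y * A x y := by
    have h := key_block A hsym hprojA hnnA (fun u => A y u)
      (fun u => hnnA y u) hrowy_fix x ha y hc
    have h' : A y y * A x x = A y x * A x y := h
    rw [hsym y x] at h'
    exact h'
  have hf_eq : f y * A x x = f x * A x y :=
    key_block A hsym hprojA hnnA f hfnn hfixA x ha y hc
  have hfx : 0 < f x := hx
  have hfy : 0 < f y := by
    have h2 : 0 < f y * A x x := by rw [hf_eq]; exact mul_pos hfx hc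
    nlinarith
  refine ⟨hfy, ?_⟩
  have hratio : f y / f x = A x y / A x x := by
    rw [div_eq_div_iff hfx.ne' ha.ne']
    linarith [hf_eq]
  have hquot : A y y / A x x = (A x y / A x x) ^ 2 := by
    field_simp
    nlinarith [hb_eq]
  show f y / f x = Real.sqrt (A y y / A x x)
  rw [hquot, Real.sqrt_sq (by positivity : 0 ≤ A x y / A x x), hratio]
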